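/- Every PP-ring (a commutative ring in which the annihilator of every element is generated by an idempotent) is a UPW-ring; more precisely, for all a, b in a PP-ring R, Ann(a) + Ann(b) = Ann(ab). -/
import Mathlib


/-- Every PP-ring is a UPW-ring; more precisely, in a PP-ring,
`Ann(a) + Ann(b) = Ann(ab)` for all `a, b`. -/
theorem stmt10 {R : Type*} [CommRing R]
    (hPP : ∀ a : R, ∃ e : R, e * e = e ∧ ∀ x : R, x * a = 0 ↔ ∃ r : R, x = e * r) :
    (∀ a b : R, Ideal.span {a} ⊓ Ideal.span {b} = ⊥ →
        ∃ x y : R, x * a = 0 ∧ y * b = 0 ∧ IsUnit (x + y)) ∧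
    (∀ a b c : R, c * (a * b) = 0 ↔ ∃ x y : R, x * a = 0 ∧ y * b = 0 ∧ c = x + y) := by
  have key : ∀ a b c : R, c * (a * b) = 0 ↔
      ∃ x y : R, x * a = 0 ∧ y * b = 0 ∧ c = x + y := by
    intro a b c
    constructor
    · intro hc
      obtain ⟨e, hee, he⟩ := hPP a
      obtain ⟨f, hff, hf⟩ := hPP b
      have hea : e * a = 0 := (he e).mpr ⟨1, (mul_one e).symm⟩
      have hfb : f * b = 0 := (hf f).mpr ⟨1, (mul_one f).symm⟩
      have habs : ∀ z : R, z * a = 0 → e * z = z := by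
        intro z hz
        obtain ⟨r, hr⟩ := (he z).mp hz
        rw [hr, ← mul_assoc, hee]
      have hcb : c * b * a = 0 := by rw [mul_assoc, mul_comm b a]; exact hc
      have h1 : e * (c * b) = c * b := habs _ hcb
      have h2 : (1 - e) * c * b = 0 := by linear_combination -h1
      refine ⟨e * c, (1 - e) * c, ?_, h2, by ring⟩
      rw [mul_comm e c, mul_assoc, hea, mul_zero]
    · rintro ⟨x, y, hx, hy, rfl⟩
      have : x * (a * b) = 0 := by rw [← mul_assoc, hx, zero_mul]
      have hyb : y * (a * b) = 0 := by
        rw [mul_comm a b, ← mul_assoc, hy, zero_mul]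
      rw [add_mul, this, hyb, add_zero]
  refine ⟨?_, key⟩
  intro a b hab
  have hmem : a * b ∈ Ideal.span {a} ⊓ Ideal.span {b} := by
    refine ⟨Ideal.mem_span_singleton.mpr ⟨b, rfl⟩, Ideal.mem_span_singleton.mpr ⟨a, mul_comm a b⟩⟩
  rw [hab] at hmem
  have h0 : a * b = 0 := hmem
  obtain ⟨x, y, hx, hy, hxy⟩ := (key a b 1).mp (by rw [h0, mul_zero])
  exact ⟨x, y, hx, hy, hxy ▸ isUnit_one⟩
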